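/- The set {(x, y) ∈ ℂ² : p(x,y) = 0, ∂p/∂x(x,y) = 0, ∂p/∂y(x,y) = 0} of singular points of the affine curve {p = 0} is exactly the set of pairwise intersection points ( jk/(2d+1), (2d+1−j)(2d+1−k)/(2d+1) ) for 0 ≤ j < k ≤ d, and it has exactly d(d+1)/2 elements. -/
import Mathlib

open MvPolynomial

/-- The affine linear form `R_k(x,y,1) = (2d+1-k)x + ky - k(2d+1-k)` as a polynomial
in two variables. -/
noncomputable def R2 (d k : ℕ) : MvPolynomial (Fin 2) ℂ :=
  C (2*(d:ℂ)+1-(k:ℂ)) * X 0 + C (k:ℂ) * X 1 - C ((k:ℂ)*(2*(d:ℂ)+1-(k:ℂ)))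

/-- `p(x,y) = P(x,y,1) = ∏_{k=0}^{d} R_k(x,y,1)` as a polynomial in two variables. -/
noncomputable def pPoly (d : ℕ) : MvPolynomial (Fin 2) ℂ :=
  ∏ k ∈ Finset.range (d+1), R2 d k

/-- The intersection point `( jk/(2d+1), (2d+1-j)(2d+1-k)/(2d+1) ) ∈ ℂ²`. -/
noncomputable def interPt (d j k : ℕ) : ℂ × ℂ :=
  ((j:ℂ)*(k:ℂ)/(2*(d:ℂ)+1),
   (2*(d:ℂ)+1-(j:ℂ))*(2*(d:ℂ)+1-(k:ℂ))/(2*(d:ℂ)+1))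

lemma hD (d : ℕ) : (2*(d:ℂ)+1) ≠ 0 := by
  have h0 : ((2*d+1 : ℕ) : ℂ) ≠ 0 := Nat.cast_ne_zero.mpr (by omega)
  intro h; apply h0; push_cast; linear_combination h

lemma hCast (d j : ℕ) (hj : j ≤ 2*d) : (2*(d:ℂ)+1-(j:ℂ)) ≠ 0 := by
  intro h
  have : (j:ℂ) = ((2*d+1 : ℕ) : ℂ) := by push_cast; linear_combination -h
  have := Nat.cast_injective (R := ℂ) this
  omega

lemma evalR2 (d k : ℕ) (x y : ℂ) :
    eval ![x, y] (R2 d k) = (2*(d:ℂ)+1-(k:ℂ))*x + (k:ℂ)*y - (k:ℂ)*(2*(d:ℂ)+1-(k:ℂ)) := by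
  simp [R2]

lemma evalR2_inter (d m j k : ℕ) :
    eval ![(interPt d j k).1, (interPt d j k).2] (R2 d m)
      = ((m:ℂ)-(j:ℂ))*((m:ℂ)-(k:ℂ)) := by
  have h := hD d
  rw [evalR2]
  simp only [interPt]
  field_simp
  ring

lemma pderiv0_R2 (d k : ℕ) : pderiv 0 (R2 d k) = C (2*(d:ℂ)+1-(k:ℂ)) := by
  simp [R2, pderiv_X, Pi.single]

lemma pderiv1_R2 (d k : ℕ) : pderiv 1 (R2 d k) = C (k:ℂ) := by
  simp [R2, pderiv_X, Pi.single]

/-- Solving the linear system. -/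
lemma solve_sys (d j k : ℕ) (x y : ℂ) (hjk : (j:ℂ) ≠ (k:ℂ))
    (h1 : (2*(d:ℂ)+1-(j:ℂ))*x + (j:ℂ)*y - (j:ℂ)*(2*(d:ℂ)+1-(j:ℂ)) = 0)
    (h2 : (2*(d:ℂ)+1-(k:ℂ))*x + (k:ℂ)*y - (k:ℂ)*(2*(d:ℂ)+1-(k:ℂ)) = 0) :
    (x, y) = interPt d j k := by
  have hd := hD d
  have hx : ((k:ℂ)-(j:ℂ)) * ((2*(d:ℂ)+1)*x - (j:ℂ)*(k:ℂ)) = 0 := by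
    linear_combination (k:ℂ)*h1 - (j:ℂ)*h2
  have hy : ((k:ℂ)-(j:ℂ)) * ((2*(d:ℂ)+1)*y - (2*(d:ℂ)+1-(j:ℂ))*(2*(d:ℂ)+1-(k:ℂ))) = 0 := by
    linear_combination (2*(d:ℂ)+1-(j:ℂ))*h2 - (2*(d:ℂ)+1-(k:ℂ))*h1
  have hkj : (k:ℂ)-(j:ℂ) ≠ 0 := sub_ne_zero.mpr (Ne.symm hjk)
  have hx' := (mul_eq_zero.mp hx).resolve_left hkj
  have hy' := (mul_eq_zero.mp hy).resolve_left hkj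
  simp only [interPt, Prod.mk.injEq]
  constructor
  · field_simp; linear_combination hx'
  · field_simp; linear_combination hy'

lemma inter_mem_lemma (d j k j' k' : ℕ) (h : interPt d j k = interPt d j' k') :
    j' = j ∨ j' = k := by
  have e1 : ((j':ℂ)-(j:ℂ))*((j':ℂ)-(k:ℂ)) = 0 := by
    rw [← evalR2_inter d j' j k, h, evalR2_inter d j' j' k', sub_self, zero_mul]
  rcases mul_eq_zero.mp e1 with h1 | h1
  · left; exact_mod_cast sub_eq_zero.mp h1
  · right; exact_mod_cast sub_eq_zero.mp h1

lemma interPt_injOn (d : ℕ) :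
    Set.InjOn (fun q : ℕ × ℕ => interPt d q.1 q.2) {q : ℕ × ℕ | q.1 < q.2 ∧ q.2 ≤ d} := by
  rintro ⟨j, k⟩ ⟨hjk, hkd⟩ ⟨j', k'⟩ ⟨hjk', hkd'⟩ h
  simp only at h
  have h1 := inter_mem_lemma d j k j' k' h
  have h2 := inter_mem_lemma d j k k' j' (by
    rw [h]; simp only [interPt]; rw [Prod.mk.injEq]; constructor <;> ring_nf)
  have h3 := inter_mem_lemma d j' k' j k h.symm
  have h4 := inter_mem_lemma d j' k' k j (by
    rw [← h]; simp only [interPt]; rw [Prod.mk.injEq]; constructor <;> ring_nf)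
  have : j = j' ∧ k = k' := by omega
  simp [this.1, this.2]

/-- The singular points of the affine curve `{p = 0}` are exactly the pairwise
intersection points of the lines of `P`, and there are exactly `d(d+1)/2` of them. -/
theorem stmt4 (d : ℕ) (hd : 1 ≤ d) :
    ({v : ℂ × ℂ | eval ![v.1, v.2] (pPoly d) = 0 ∧
        eval ![v.1, v.2] (pderiv 0 (pPoly d)) = 0 ∧
        eval ![v.1, v.2] (pderiv 1 (pPoly d)) = 0}
      = {v : ℂ × ℂ | ∃ j k : ℕ, j < k ∧ k ≤ d ∧ v = interPt d j k}) ∧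
    ({v : ℂ × ℂ | eval ![v.1, v.2] (pPoly d) = 0 ∧
        eval ![v.1, v.2] (pderiv 0 (pPoly d)) = 0 ∧
        eval ![v.1, v.2] (pderiv 1 (pPoly d)) = 0}.ncard = d*(d+1)/2) := by
  have hset : ({v : ℂ × ℂ | eval ![v.1, v.2] (pPoly d) = 0 ∧
        eval ![v.1, v.2] (pderiv 0 (pPoly d)) = 0 ∧
        eval ![v.1, v.2] (pderiv 1 (pPoly d)) = 0}
      = {v : ℂ × ℂ | ∃ j k : ℕ, j < k ∧ k ≤ d ∧ v = interPt d j k}) := by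
    ext v
    simp only [Set.mem_setOf_eq]
    constructor
    · rintro ⟨hp, hp0, hp1⟩
      rw [pPoly, map_prod] at hp
      obtain ⟨j, hjmem, hj⟩ := Finset.prod_eq_zero_iff.mp hp
      have hjd : j ≤ d := by have := Finset.mem_range.mp hjmem; omega
      by_cases hQ : ∃ k ∈ Finset.range (d+1), k ≠ j ∧ eval ![v.1, v.2] (R2 d k) = 0
      · obtain ⟨k, hkmem, hkj, hk⟩ := hQ
        have hkd : k ≤ d := by have := Finset.mem_range.mp hkmem; omega
        rw [evalR2] at hj hk
        rcases lt_or_gt_of_ne hkj with hlt | hlt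
        · refine ⟨k, j, hlt, hjd, ?_⟩
          have := solve_sys d k j v.1 v.2
            (fun h => hkj (Nat.cast_injective h)) hk hj
          rw [← this]
        · refine ⟨j, k, hlt, hkd, ?_⟩
          have := solve_sys d j k v.1 v.2
            (fun h => hkj (Nat.cast_injective h.symm)) hj hk
          rw [← this]
      · exfalso
        push_neg at hQ
        have hQne : eval ![v.1, v.2] (∏ k ∈ (Finset.range (d+1)).erase j, R2 d k) ≠ 0 := by
          rw [map_prod]
          apply Finset.prod_ne_zero_iff.mpr
          intro k hk
          exact hQ k (Finset.mem_of_mem_erase hk) (Finset.ne_of_mem_erase hk)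
        have hsplit : pPoly d = R2 d j * ∏ k ∈ (Finset.range (d+1)).erase j, R2 d k :=
          (Finset.mul_prod_erase _ _ hjmem).symm
        rw [hsplit, pderiv_mul, pderiv0_R2, map_add, map_mul, map_mul, eval_C, hj,
          zero_mul, add_zero] at hp0
        rcases mul_eq_zero.mp hp0 with h | h
        · exact hCast d j (by omega) h
        · exact hQne h
    · rintro ⟨j, k, hjk, hkd, rfl⟩
      have hjmem : j ∈ Finset.range (d+1) := Finset.mem_range.mpr (by omega)
      have hkmem : k ∈ (Finset.range (d+1)).erase j :=
        Finset.mem_erase.mpr ⟨by omega, Finset.mem_range.mpr (by omega)⟩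
      have hj0 : eval ![(interPt d j k).1, (interPt d j k).2] (R2 d j) = 0 := by
        rw [evalR2_inter, sub_self, zero_mul]
      have hk0 : eval ![(interPt d j k).1, (interPt d j k).2] (R2 d k) = 0 := by
        rw [evalR2_inter, sub_self, mul_zero]
      have hQ0 : eval ![(interPt d j k).1, (interPt d j k).2]
          (∏ m ∈ (Finset.range (d+1)).erase j, R2 d m) = 0 := by
        rw [map_prod]
        exact Finset.prod_eq_zero hkmem hk0
      have hsplit : pPoly d = R2 d j * ∏ m ∈ (Finset.range (d+1)).erase j, R2 d m :=
        (Finset.mul_prod_erase _ _ hjmem).symm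
      refine ⟨?_, ?_, ?_⟩
      · rw [hsplit, map_mul, hj0, zero_mul]
      · rw [hsplit, pderiv_mul, pderiv0_R2, map_add, map_mul, map_mul, hj0, hQ0,
          mul_zero, zero_mul, add_zero]
      · rw [hsplit, pderiv_mul, pderiv1_R2, map_add, map_mul, map_mul, hj0, hQ0,
          mul_zero, zero_mul, add_zero]
  refine ⟨hset, ?_⟩
  rw [hset]
  have himg : {v : ℂ × ℂ | ∃ j k : ℕ, j < k ∧ k ≤ d ∧ v = interPt d j k}
      = (fun q : ℕ × ℕ => interPt d q.1 q.2) '' {q : ℕ × ℕ | q.1 < q.2 ∧ q.2 ≤ d} := by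
    ext v
    constructor
    · rintro ⟨j, k, h1, h2, rfl⟩
      exact ⟨(j, k), ⟨h1, h2⟩, rfl⟩
    · rintro ⟨⟨j, k⟩, ⟨h1, h2⟩, rfl⟩
      exact ⟨j, k, h1, h2, rfl⟩
  have hTset : {q : ℕ × ℕ | q.1 < q.2 ∧ q.2 ≤ d}
      = ↑(Finset.filter (fun q : ℕ × ℕ => q.1 < q.2)
          (Finset.range (d+1) ×ˢ Finset.range (d+1))) := by
    ext ⟨j, k⟩
    simp only [Set.mem_setOf_eq, Finset.coe_filter, Finset.mem_product, Finset.mem_range]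
    constructor
    · rintro ⟨h1, h2⟩; exact ⟨⟨by omega, by omega⟩, h1⟩
    · rintro ⟨⟨_, h2⟩, h1⟩; exact ⟨h1, by omega⟩
  have hcard : (Finset.filter (fun q : ℕ × ℕ => q.1 < q.2)
      (Finset.range (d+1) ×ˢ Finset.range (d+1))).card = d*(d+1)/2 := by
    have hb : (Finset.filter (fun q : ℕ × ℕ => q.1 < q.2)
        (Finset.range (d+1) ×ˢ Finset.range (d+1))).card
        = ((Finset.range (d+1)).sigma (fun k => Finset.range k)).card := by
      apply Finset.card_bij (fun q _ => (⟨q.2, q.1⟩ : (_ : ℕ) × ℕ))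
      · rintro ⟨j, k⟩ hq
        simp only [Finset.mem_filter, Finset.mem_product, Finset.mem_range] at hq
        simp only [Finset.mem_sigma, Finset.mem_range]
        exact ⟨hq.1.2, hq.2⟩
      · rintro ⟨j, k⟩ _ ⟨j', k'⟩ _ h
        have h1 : k = k' := congrArg Sigma.fst h
        subst h1
        have h2 : j = j' := by
          have := congrArg Sigma.snd h
          simpa using this
        simp [h2]
      · rintro ⟨k, j⟩ hm
        simp only [Finset.mem_sigma, Finset.mem_range] at hm
        refine ⟨(j, k), ?_, rfl⟩
        simp only [Finset.mem_filter, Finset.mem_product, Finset.mem_range]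
        exact ⟨⟨by omega, hm.1⟩, hm.2⟩
    rw [hb, Finset.card_sigma]
    simp only [Finset.card_range]
    have h1 : (∑ i ∈ Finset.range (d+1), i) * 2 = (d+1) * d := by
      simpa using Finset.sum_range_id_mul_two (d+1)
    have h2 : (d+1)*d = d*(d+1) := by ring
    omega
  rw [himg, Set.ncard_image_of_injOn (interPt_injOn d), hTset,
    Set.ncard_coe_finset, hcard]
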